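/- Let P = ((V,E),(V₁,V_R)) be an MDP skeleton and let X be an end-component of P. Then: (a) for every S with X ⊆ S ⊆ V, X is contained in a single strongly connected component of the subgraph induced on S; and (b) for every S' with X ⊆ S' ⊆ V and every W ⊆ S' with W ∩ X = ∅, the random attractor Attr(P[S'], W) is disjoint from X. -/

import Mathlib

/-- The subgraph induced on `X` is strongly connected: any two vertices of `X`
are joined by a path staying inside `X`. -/
def SCOn {V : Type*} (E : V → V → Prop) (X : Set V) : Prop :=
  ∀ u ∈ X, ∀ v ∈ X, Relation.ReflTransGen (fun a b => a ∈ X ∧ b ∈ X ∧ E a b) u v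

/-- `X` is an end-component of the MDP skeleton with edges `E`, random vertices `VR`
(and player-1 vertices `VRᶜ`): the induced subgraph is strongly connected and has an
edge, and all edges leaving random vertices of `X` stay in `X`. -/
def IsEC {V : Type*} (E : V → V → Prop) (VR X : Set V) : Prop :=
  SCOn E X ∧ (∃ a ∈ X, ∃ b ∈ X, E a b) ∧ ∀ v ∈ X ∩ VR, ∀ w, E v w → w ∈ X

/-- `C` is a strongly connected component of the subgraph induced on `S`. -/
def IsSCCIn {V : Type*} (E : V → V → Prop) (S C : Set V) : Prop :=
  C.Nonempty ∧ C ⊆ S ∧ SCOn (fun a b => a ∈ S ∧ b ∈ S ∧ E a b) C ∧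
    ∀ D, C ⊆ D → D ⊆ S → SCOn (fun a b => a ∈ S ∧ b ∈ S ∧ E a b) D → D = C

/-- The random attractor of `W` computed in the sub-MDP `P[S]`: the least set containing
`W` and closed under adding random vertices of `S` with a successor (within `S`) in the
attractor, and player-1 vertices of `S` all of whose successors within `S` are in the
attractor. -/
inductive AttrIn {V : Type*} (E : V → V → Prop) (VR S W : Set V) : V → Prop
  | base {v : V} : v ∈ S → v ∈ W → AttrIn E VR S W v
  | rand {v w : V} : v ∈ S → v ∈ VR → w ∈ S → E v w → AttrIn E VR S W w →
      AttrIn E VR S W v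
  | play {v : V} : v ∈ S → v ∉ VR → (∀ w ∈ S, E v w → AttrIn E VR S W w) →
      AttrIn E VR S W v

theorem stmt4 {V : Type*} [Fintype V] (E : V → V → Prop) (VR X : Set V)
    (hEC : IsEC E VR X) :
    (∀ S : Set V, X ⊆ S → ∃ C : Set V, IsSCCIn E S C ∧ X ⊆ C) ∧
    (∀ S' W : Set V, X ⊆ S' → W ⊆ S' → W ∩ X = ∅ →
      ∀ v ∈ X, ¬ AttrIn E VR S' W v) := by
  obtain ⟨hSC, ⟨a0, ha0, b0, hb0, hab⟩, hclosed⟩ := hEC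
  constructor
  · intro S hXS
    set E' : V → V → Prop := fun a b => a ∈ S ∧ b ∈ S ∧ E a b with hE'
    set C : Set V := {v | Relation.ReflTransGen E' a0 v ∧ Relation.ReflTransGen E' v a0}
      with hCdef
    have ha0C : a0 ∈ C := ⟨.refl, .refl⟩
    have hXsub : X ⊆ C := by
      intro x hx
      exact ⟨Relation.ReflTransGen.mono (fun a b h => ⟨hXS h.1, hXS h.2.1, h.2.2⟩) _ _ (hSC a0 ha0 x hx),
        Relation.ReflTransGen.mono (fun a b h => ⟨hXS h.1, hXS h.2.1, h.2.2⟩) _ _ (hSC x hx a0 ha0)⟩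
    have hCS : C ⊆ S := by
      intro v hv
      rcases hv.2.cases_head with heq | ⟨c, hc, _⟩
      · exact heq ▸ hXS ha0
      · exact hc.1
    have key1 : ∀ u, Relation.ReflTransGen E' u a0 → Relation.ReflTransGen E' a0 u →
        Relation.ReflTransGen (fun a b => a ∈ C ∧ b ∈ C ∧ E' a b) u a0 := by
      intro u h1
      induction h1 using Relation.ReflTransGen.head_induction_on with
      | refl => intro _; exact .refl
      | head hac hc ih =>
        rename_i a c
        intro h0a
        have hcC : c ∈ C := ⟨h0a.tail hac, hc⟩
        have haC : a ∈ C := ⟨h0a, Relation.ReflTransGen.head hac hc⟩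
        exact Relation.ReflTransGen.head ⟨haC, hcC, hac⟩ (ih (h0a.tail hac))
    have key2 : ∀ v, Relation.ReflTransGen E' a0 v → Relation.ReflTransGen E' v a0 →
        Relation.ReflTransGen (fun a b => a ∈ C ∧ b ∈ C ∧ E' a b) a0 v := by
      intro v h1
      induction h1 with
      | refl => intro _; exact .refl
      | tail hb hbc ih =>
        rename_i b c
        intro hc0
        have hbC : b ∈ C := ⟨hb, Relation.ReflTransGen.head hbc hc0⟩
        have hcC : c ∈ C := ⟨hb.tail hbc, hc0⟩
        exact (ih (Relation.ReflTransGen.head hbc hc0)).tail ⟨hbC, hcC, hbc⟩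
    refine ⟨C, ⟨⟨a0, ha0C⟩, hCS, ?_, ?_⟩, hXsub⟩
    · intro u hu v hv
      exact (key1 u hu.2 hu.1).trans (key2 v hv.1 hv.2)
    · intro D hCD hDS hD
      apply Set.eq_of_subset_of_subset _ hCD
      intro v hv
      exact ⟨Relation.ReflTransGen.mono (fun a b h => h.2.2) _ _ (hD a0 (hCD ha0C) v hv),
        Relation.ReflTransGen.mono (fun a b h => h.2.2) _ _ (hD v hv a0 (hCD ha0C))⟩
  · intro S' W hXS hWS hWX
    have key : ∀ v, AttrIn E VR S' W v → v ∉ X := by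
      intro v h
      induction h with
      | base hS hW =>
        intro hvX
        exact Set.eq_empty_iff_forall_notMem.mp hWX _ ⟨hW, hvX⟩
      | rand hS hVR hwS hE _ ih =>
        intro hvX
        exact ih (hclosed _ ⟨hvX, hVR⟩ _ hE)
      | play hS hVR hsucc ih =>
        intro hvX
        rename_i v'
        obtain ⟨w, hwX, hEvw⟩ : ∃ w ∈ X, E v' w := by
          rcases (hSC v' hvX a0 ha0).cases_head with heq | ⟨c, hc, _⟩
          · exact ⟨b0, hb0, heq ▸ hab⟩
          · exact ⟨c, hc.2.1, hc.2.2⟩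
        exact ih w (hXS hwX) hEvw hwX
    exact fun v hvX hattr => key v hattr hvX
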